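/- Let $0 < a < 1$ and define $R_0(x,z) = \frac{(1-|x|^2)(1-|z|^2)}{|x-z|^2}$ for $x, z$ in the open unit ball of $\mathbb{R}^n$ with $x \ne z$. Then for every fixed $x$ in the open unit ball and every $\omega$ on the unit sphere, $\lim_{z \to \omega,\ |z|<1} \frac{1}{(1-|z|^2)^a}\cdot \frac{1}{|z-x|^{n-2a}} \int_0^{R_0(x,z)} \frac{t^{a-1}}{(1+t)^{n/2}}\,dt = \frac{1}{a}\cdot \frac{(1-|x|^2)^a}{|x-\omega|^n}$. -/

import Mathlib

open Metric Filter Topology MeasureTheory Real intervalIntegral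

lemma aux_g (n : ℕ) (a : ℝ) (ha : 0 < a) (ha1 : a < 1) :
    Tendsto (fun R : ℝ => (∫ t in (0:ℝ)..R, t ^ (a - 1) / (1 + t) ^ ((n : ℝ) / 2)) / R ^ a)
      (𝓝[>] 0) (𝓝 (1 / a)) := by
  have hp : (0:ℝ) ≤ (n:ℝ)/2 := by positivity
  have hL : Tendsto (fun R : ℝ => (1 / (1 + R) ^ ((n:ℝ)/2)) * (1 / a)) (𝓝[>] (0:ℝ))
      (𝓝 (1 / a)) := by
    have h1 : ContinuousAt (fun R : ℝ => (1 + R) ^ ((n:ℝ)/2)) 0 :=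
      (continuousAt_const.add continuousAt_id).rpow_const (Or.inr hp)
    have h2 : ((1:ℝ) + 0) ^ ((n:ℝ)/2) ≠ 0 := by positivity
    have hc : ContinuousAt (fun R : ℝ => (1 / (1 + R) ^ ((n:ℝ)/2)) * (1 / a)) 0 :=
      (continuousAt_const.div h1 h2).mul continuousAt_const
    have := hc.tendsto.mono_left (nhdsWithin_le_nhds (s := Set.Ioi (0:ℝ)))
    simpa using this
  have key : ∀ᶠ R in 𝓝[>] (0:ℝ),
      (1 / (1 + R) ^ ((n:ℝ)/2)) * (1 / a) ≤
        (∫ t in (0:ℝ)..R, t ^ (a - 1) / (1 + t) ^ ((n : ℝ) / 2)) / R ^ a ∧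
      (∫ t in (0:ℝ)..R, t ^ (a - 1) / (1 + t) ^ ((n : ℝ) / 2)) / R ^ a ≤ 1 / a := by
    filter_upwards [self_mem_nhdsWithin] with R hR
    have hR0 : (0:ℝ) < R := hR
    have hRa : (0:ℝ) < R ^ a := by positivity
    have hden : (0:ℝ) < (1 + R) ^ ((n:ℝ)/2) := by positivity
    have hpow : IntervalIntegrable (fun t : ℝ => t ^ (a - 1)) volume 0 R :=
      intervalIntegrable_rpow' (by linarith)
    have hmeas : Measurable fun t : ℝ => t ^ (a - 1) / (1 + t) ^ ((n:ℝ)/2) := by fun_prop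
    have hint : IntervalIntegrable (fun t : ℝ => t ^ (a - 1) / (1 + t) ^ ((n:ℝ)/2))
        volume 0 R := by
      refine hpow.mono_fun hmeas.aestronglyMeasurable ?_
      rw [Set.uIoc_of_le hR0.le]
      filter_upwards [ae_restrict_mem measurableSet_Ioc] with t ht
      have ht0 : 0 < t := ht.1
      have h1 : (1:ℝ) ≤ (1 + t) ^ ((n:ℝ)/2) := Real.one_le_rpow (by linarith) hp
      rw [Real.norm_of_nonneg (by positivity), Real.norm_of_nonneg (by positivity)]
      exact div_le_self (by positivity) h1
    have I1 : (∫ t in (0:ℝ)..R, t ^ (a - 1)) = R ^ a / a := by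
      rw [integral_rpow (Or.inl (by linarith))]
      rw [sub_add_cancel, Real.zero_rpow ha.ne', sub_zero]
    constructor
    · have hle : (∫ t in (0:ℝ)..R, t ^ (a - 1) / (1 + R) ^ ((n:ℝ)/2)) ≤
          ∫ t in (0:ℝ)..R, t ^ (a - 1) / (1 + t) ^ ((n:ℝ)/2) := by
        refine intervalIntegral.integral_mono_on hR0.le (hpow.div_const _) hint ?_
        intro t ht
        have ht0 : 0 ≤ t := ht.1
        refine div_le_div_of_nonneg_left (by positivity) (by positivity) ?_
        exact Real.rpow_le_rpow (by linarith) (by linarith [ht.2]) hp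
      rw [intervalIntegral.integral_div, I1] at hle
      have heq : (1 / (1 + R) ^ ((n:ℝ)/2)) * (1 / a) = ((R ^ a / a) / (1 + R) ^ ((n:ℝ)/2)) / R ^ a := by
        field_simp
      rw [heq, div_le_div_iff_of_pos_right hRa]
      exact hle
    · have hle2 : (∫ t in (0:ℝ)..R, t ^ (a - 1) / (1 + t) ^ ((n:ℝ)/2)) ≤
          ∫ t in (0:ℝ)..R, t ^ (a - 1) := by
        refine intervalIntegral.integral_mono_on hR0.le hint hpow ?_
        intro t ht
        have ht0 : 0 ≤ t := ht.1
        have h1 : (1:ℝ) ≤ (1 + t) ^ ((n:ℝ)/2) := Real.one_le_rpow (by linarith) hp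
        exact div_le_self (by positivity) h1
      rw [I1] at hle2
      rw [div_le_iff₀ hRa]
      calc _ ≤ R ^ a / a := hle2
        _ = 1 / a * R ^ a := by ring
  exact tendsto_of_tendsto_of_tendsto_of_le_of_le' hL tendsto_const_nhds
    (key.mono fun R h => h.1) (key.mono fun R h => h.2)

theorem green_boundary_limit (n : ℕ) (hn : 2 ≤ n) (a : ℝ) (ha : 0 < a) (ha1 : a < 1)
    (x : EuclideanSpace ℝ (Fin n)) (hx : x ∈ ball (0 : EuclideanSpace ℝ (Fin n)) 1)
    (ω : EuclideanSpace ℝ (Fin n)) (hω : ω ∈ sphere (0 : EuclideanSpace ℝ (Fin n)) 1) :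
    Tendsto
      (fun z : EuclideanSpace ℝ (Fin n) =>
        (1 / (1 - ‖z‖ ^ 2) ^ a) * (1 / ‖z - x‖ ^ ((n : ℝ) - 2 * a)) *
          ∫ t in (0:ℝ)..((1 - ‖x‖ ^ 2) * (1 - ‖z‖ ^ 2) / ‖x - z‖ ^ 2),
            t ^ (a - 1) / (1 + t) ^ ((n : ℝ) / 2))
      (𝓝[ball (0 : EuclideanSpace ℝ (Fin n)) 1 \ {x}] ω)
      (𝓝 ((1 / a) * ((1 - ‖x‖ ^ 2) ^ a / ‖x - ω‖ ^ (n : ℝ)))) := by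
  let E := EuclideanSpace ℝ (Fin n)
  set s : Set E := ball (0 : E) 1 \ {x} with hs
  set l : Filter E := 𝓝[s] ω with hl
  have hxn : ‖x‖ < 1 := mem_ball_zero_iff.mp hx
  have hωn : ‖ω‖ = 1 := mem_sphere_zero_iff_norm.mp hω
  set A : ℝ := 1 - ‖x‖ ^ 2 with hAdef
  have hA : 0 < A := by nlinarith [norm_nonneg x]
  have hωx : ω ≠ x := by
    intro h
    rw [h] at hωn
    linarith
  have hωx0 : (0:ℝ) < ‖ω - x‖ := by
    rw [norm_pos_iff, sub_ne_zero]
    exact hωx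
  -- limits of basic quantities
  have hB : Tendsto (fun z : E => 1 - ‖z‖ ^ 2) l (𝓝 0) := by
    have h1 : Tendsto (fun z : E => 1 - ‖z‖ ^ 2) (𝓝 ω) (𝓝 (1 - ‖ω‖ ^ 2)) :=
      (continuous_const.sub (continuous_norm.pow 2)).tendsto ω
    have h2 := h1.mono_left (nhdsWithin_le_nhds (s := s))
    rw [hωn] at h2
    simpa using h2
  have hDzx : Tendsto (fun z : E => ‖z - x‖) l (𝓝 ‖ω - x‖) := by
    exact ((continuous_id.sub continuous_const).norm.tendsto ω).mono_left nhdsWithin_le_nhds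
  have hDxz : Tendsto (fun z : E => ‖x - z‖) l (𝓝 ‖x - ω‖) := by
    exact ((continuous_const.sub continuous_id).norm.tendsto ω).mono_left nhdsWithin_le_nhds
  -- R tends to 0 within Ioi 0
  have hR0 : Tendsto (fun z : E => A * (1 - ‖z‖ ^ 2) / ‖x - z‖ ^ 2) l (𝓝 0) := by
    have hne : (‖x - ω‖ : ℝ) ^ 2 ≠ 0 := by
      have : (0:ℝ) < ‖x - ω‖ := by rwa [norm_sub_rev]
      positivity
    have h3 := ((tendsto_const_nhds (x := A)).mul hB).div (hDxz.pow 2) hne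
    simp only [mul_zero, zero_div] at h3
    exact h3
  have hRpos : ∀ᶠ z in l, A * (1 - ‖z‖ ^ 2) / ‖x - z‖ ^ 2 ∈ Set.Ioi (0:ℝ) := by
    filter_upwards [eventually_mem_nhdsWithin] with z hz
    have hz1 : ‖z‖ < 1 := mem_ball_zero_iff.mp hz.1
    have hzx : z ≠ x := hz.2
    have hB0 : 0 < 1 - ‖z‖ ^ 2 := by nlinarith [norm_nonneg z]
    have hD0 : (0:ℝ) < ‖x - z‖ := by
      rw [norm_pos_iff, sub_ne_zero]
      exact fun h => hzx h.symm
    exact Set.mem_Ioi.mpr (div_pos (mul_pos hA hB0) (pow_pos hD0 2))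
  have hRt : Tendsto (fun z : E => A * (1 - ‖z‖ ^ 2) / ‖x - z‖ ^ 2) l (𝓝[>] (0:ℝ)) :=
    tendsto_nhdsWithin_iff.mpr ⟨hR0, hRpos⟩
  have hg : Tendsto (fun z : E =>
      (∫ t in (0:ℝ)..(A * (1 - ‖z‖ ^ 2) / ‖x - z‖ ^ 2),
        t ^ (a - 1) / (1 + t) ^ ((n : ℝ) / 2)) / (A * (1 - ‖z‖ ^ 2) / ‖x - z‖ ^ 2) ^ a)
      l (𝓝 (1 / a)) := (aux_g n a ha ha1).comp hRt
  have hc1 : Tendsto (fun z : E => A ^ a / ‖z - x‖ ^ (n : ℝ)) l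
      (𝓝 (A ^ a / ‖ω - x‖ ^ (n : ℝ))) := by
    refine tendsto_const_nhds.div (hDzx.rpow_const (Or.inl hωx0.ne')) ?_
    exact (Real.rpow_pos_of_pos hωx0 _).ne'
  have hmul := hg.mul hc1
  have htarget : (1 / a) * ((1 - ‖x‖ ^ 2) ^ a / ‖x - ω‖ ^ (n : ℝ)) =
      1 / a * (A ^ a / ‖ω - x‖ ^ (n : ℝ)) := by
    rw [norm_sub_rev]
  rw [htarget]
  refine hmul.congr' ?_
  filter_upwards [eventually_mem_nhdsWithin] with z hz
  have hz1 : ‖z‖ < 1 := mem_ball_zero_iff.mp hz.1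
  have hzx : z ≠ x := hz.2
  set B : ℝ := 1 - ‖z‖ ^ 2 with hBdef
  have hB0 : 0 < B := by nlinarith [norm_nonneg z]
  have hD0 : (0:ℝ) < ‖z - x‖ := by
    rw [norm_pos_iff, sub_ne_zero]
    exact hzx
  have hxz : ‖x - z‖ = ‖z - x‖ := norm_sub_rev x z
  rw [hxz]
  set D : ℝ := ‖z - x‖ with hDdef
  set I : ℝ := ∫ t in (0:ℝ)..(A * B / D ^ 2), t ^ (a - 1) / (1 + t) ^ ((n : ℝ) / 2) with hI
  have h2a : (D ^ 2 : ℝ) ^ a = D ^ (2 * a) := by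
    rw [← Real.rpow_natCast D 2, ← Real.rpow_mul hD0.le]
    norm_num
  have hRa : (A * B / D ^ 2 : ℝ) ^ a = A ^ a * B ^ a / D ^ (2 * a) := by
    rw [Real.div_rpow (by positivity) (by positivity), Real.mul_rpow hA.le hB0.le, h2a]
  have hDn : D ^ (n : ℝ) = D ^ ((n : ℝ) - 2 * a) * D ^ (2 * a) := by
    rw [← Real.rpow_add hD0, sub_add_cancel]
  have hAa : (0:ℝ) < A ^ a := Real.rpow_pos_of_pos hA _
  have hBa : (0:ℝ) < B ^ a := Real.rpow_pos_of_pos hB0 _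
  have hD2a : (0:ℝ) < D ^ (2 * a) := Real.rpow_pos_of_pos hD0 _
  have hDna : (0:ℝ) < D ^ ((n : ℝ) - 2 * a) := Real.rpow_pos_of_pos hD0 _
  rw [hRa, hDn]
  field_simp
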